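/- Let F = {f₁,…,f_k} be an IFS of similarities on a complete metric space X with similarity factors c_i ∈ (0,1) and attractor K with diam(K) > 0, equipped with its natural fractal structure. Then the fractal dimension III of K, defined as dim³(K) = inf{s ≥ 0 : H^s_3(K) = 0} where H^s_3(K) = lim_{n→∞} inf{∑_{ω ∈ I^m} diam(f_ω(K))^s : m ≥ n}, equals the unique solution s of ∑_{i∈I} c_i^s = 1. No open set condition is required. -/

import Mathlib

open Metric Set Filter Topology MeasureTheory ENNReal NNReal

noncomputable section

/-- A map is a similarity with factor `c` if it scales all distances exactly by `c`. -/
def IsSimilarity {X : Type*} [MetricSpace X] (f : X → X) (c : ℝ) : Prop :=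
  ∀ x y, dist (f x) (f y) = c * dist x y

/-- Composition `f_{ω₁} ∘ ⋯ ∘ f_{ω_n}` of the maps of an IFS along a word `ω`. -/
def wordComp {X : Type*} {k : ℕ} (f : Fin k → X → X) {n : ℕ} (ω : Fin n → Fin k) : X → X :=
  (List.ofFn fun i => f (ω i)).foldr (· ∘ ·) id

/-- Number of elements of level `Γ_n` of the natural fractal structure (counted with
multiplicity over words) that meet `K`. -/
def levelCount {X : Type*} [MetricSpace X] {k : ℕ} (f : Fin k → X → X) (K : Set X)
    (n : ℕ) : ℕ :=
  Set.ncard {ω : Fin n → Fin k | ((wordComp f ω '' K) ∩ K).Nonempty}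

/-- `δ(K, Γ_n)`: supremum of diameters of the elements of level `Γ_n` meeting `K`. -/
def deltaLevel {X : Type*} [MetricSpace X] {k : ℕ} (f : Fin k → X → X) (K : Set X)
    (n : ℕ) : ℝ :=
  sSup {d : ℝ | ∃ ω : Fin n → Fin k, ((wordComp f ω '' K) ∩ K).Nonempty ∧
    d = Metric.diam (wordComp f ω '' K)}

/-- `N_δ(K)`: the largest number of disjoint closed balls of radius `δ` with centres in `K`. -/
def packingNum {X : Type*} [MetricSpace X] (K : Set X) (δ : ℝ) : ℕ :=
  sSup {m : ℕ | ∃ t : Finset X, t.card = m ∧ ↑t ⊆ K ∧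
    (t : Set X).Pairwise fun x y => Disjoint (Metric.closedBall x δ) (Metric.closedBall y δ)}

/-- The pre-measure `H^s_{n,3}(K)`: infimum over whole levels `m ≥ n` of the sum of the
`s`-th powers of the diameters of all elements of that level (with multiplicity). -/
def H3pre {X : Type*} [MetricSpace X] {k : ℕ} (f : Fin k → X → X) (K : Set X)
    (s : ℝ) (n : ℕ) : ℝ≥0∞ :=
  ⨅ m : {m : ℕ // n ≤ m}, ∑ ω : Fin m.1 → Fin k,
    ENNReal.ofReal (Metric.diam (wordComp f ω '' K)) ^ s

/-- `H^s_3(K)`: the (monotone) limit of `H^s_{n,3}(K)` as `n → ∞`. -/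
def H3 {X : Type*} [MetricSpace X] {k : ℕ} (f : Fin k → X → X) (K : Set X) (s : ℝ) : ℝ≥0∞ :=
  ⨆ n : ℕ, H3pre f K s n

/-- `H^s_4(K)`: limit over `n` of the infimum over finite covers of `K` by elements of
levels `≥ n` of the natural fractal structure. -/
def H4 {X : Type*} [MetricSpace X] {k : ℕ} (f : Fin k → X → X) (K : Set X) (s : ℝ) : ℝ≥0∞ :=
  ⨆ n : ℕ, ⨅ (𝒜 : Set (Set X)) (_ : 𝒜.Finite ∧
      (∀ A ∈ 𝒜, ∃ m, n ≤ m ∧ ∃ ω : Fin m → Fin k, A = wordComp f ω '' K) ∧ K ⊆ ⋃₀ 𝒜),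
    ∑' A : 𝒜, ENNReal.ofReal (Metric.diam (A : Set X)) ^ s

/-- `H^s_5(K)`: limit over `n` of the infimum over countable covers of `K` by elements of
levels `≥ n` of the natural fractal structure. -/
def H5 {X : Type*} [MetricSpace X] {k : ℕ} (f : Fin k → X → X) (K : Set X) (s : ℝ) : ℝ≥0∞ :=
  ⨆ n : ℕ, ⨅ (𝒜 : Set (Set X)) (_ : 𝒜.Countable ∧
      (∀ A ∈ 𝒜, ∃ m, n ≤ m ∧ ∃ ω : Fin m → Fin k, A = wordComp f ω '' K) ∧ K ⊆ ⋃₀ 𝒜),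
    ∑' A : 𝒜, ENNReal.ofReal (Metric.diam (A : Set X)) ^ s

/-- `H^s_6(K)`: limit as `δ → 0` of the infimum over countable covers of `K` by
fractal-structure elements of diameter at most `δ`. -/
def H6 {X : Type*} [MetricSpace X] {k : ℕ} (f : Fin k → X → X) (K : Set X) (s : ℝ) : ℝ≥0∞ :=
  ⨆ (δ : ℝ) (_ : 0 < δ), ⨅ (𝒜 : Set (Set X)) (_ : 𝒜.Countable ∧
      (∀ A ∈ 𝒜, (∃ m, ∃ ω : Fin m → Fin k, A = wordComp f ω '' K) ∧ Metric.diam A ≤ δ) ∧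
      K ⊆ ⋃₀ 𝒜),
    ∑' A : 𝒜, ENNReal.ofReal (Metric.diam (A : Set X)) ^ s

/-- The open set condition for a family of self-maps of `ℝ^d`. -/
def OSC {d k : ℕ} (f : Fin k → EuclideanSpace ℝ (Fin d) → EuclideanSpace ℝ (Fin d)) : Prop :=
  ∃ V : Set (EuclideanSpace ℝ (Fin d)), V.Nonempty ∧ IsOpen V ∧ Bornology.IsBounded V ∧
    (∀ i, f i '' V ⊆ V) ∧ Pairwise fun i j => Disjoint (f i '' V) (f j '' V)

lemma IsSimilarity.comp {X : Type*} [MetricSpace X] {f g : X → X} {a b : ℝ}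
    (hf : IsSimilarity f a) (hg : IsSimilarity g b) : IsSimilarity (f ∘ g) (a * b) := by
  intro x y
  show dist (f (g x)) (f (g y)) = a * b * dist x y
  rw [hf (g x) (g y), hg x y, mul_assoc]

lemma wordComp_succ {X : Type*} {k : ℕ} (f : Fin k → X → X) {n : ℕ} (ω : Fin (n+1) → Fin k) :
    wordComp f ω = f (ω 0) ∘ wordComp f (fun i => ω i.succ) := by
  simp [wordComp, List.ofFn_succ]

lemma isSimilarity_wordComp {X : Type*} [MetricSpace X] {k : ℕ} {f : Fin k → X → X}
    {c : Fin k → ℝ} (hf : ∀ i, IsSimilarity (f i) (c i)) :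
    ∀ {n : ℕ} (ω : Fin n → Fin k), IsSimilarity (wordComp f ω) (∏ i, c (ω i)) := by
  intro n
  induction n with
  | zero =>
    intro ω
    simp only [Finset.univ_eq_empty, Finset.prod_empty]
    intro x y
    simp [wordComp]
  | succ n ih =>
    intro ω
    rw [wordComp_succ, Fin.prod_univ_succ]
    exact (hf _).comp (ih _)

lemma IsSimilarity.diam_image {X : Type*} [MetricSpace X] {g : X → X} {a : ℝ} (ha : 0 < a)
    (hg : IsSimilarity g a) (S : Set X) :
    Metric.diam (g '' S) = a * Metric.diam S := by
  have he : EMetric.diam (g '' S) = ENNReal.ofReal a * EMetric.diam S := by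
    apply le_antisymm
    · apply EMetric.diam_le
      rintro _ ⟨x, hx, rfl⟩ _ ⟨y, hy, rfl⟩
      rw [edist_dist, hg x y, ENNReal.ofReal_mul ha.le, ← edist_dist]
      exact mul_le_mul_right (EMetric.edist_le_diam_of_mem hx hy) _
    · have h2 : EMetric.diam S ≤ ENNReal.ofReal a⁻¹ * EMetric.diam (g '' S) := by
        apply EMetric.diam_le
        intro x hx y hy
        have hxy : dist x y = a⁻¹ * dist (g x) (g y) := by rw [hg x y]; field_simp
        rw [edist_dist, hxy, ENNReal.ofReal_mul (by positivity), ← edist_dist]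
        exact mul_le_mul_right
          (EMetric.edist_le_diam_of_mem (mem_image_of_mem _ hx) (mem_image_of_mem _ hy)) _
      calc ENNReal.ofReal a * EMetric.diam S
          ≤ ENNReal.ofReal a * (ENNReal.ofReal a⁻¹ * EMetric.diam (g '' S)) :=
            mul_le_mul_right h2 _
        _ = EMetric.diam (g '' S) := by
            rw [← mul_assoc, ← ENNReal.ofReal_mul ha.le, mul_inv_cancel₀ ha.ne',
              ENNReal.ofReal_one, one_mul]
  rw [Metric.diam, Metric.diam, show Metric.ediam (g '' S) = ENNReal.ofReal a * Metric.ediam S from he, ENNReal.toReal_mul, ENNReal.toReal_ofReal ha.le]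

/-- generalized Moran theorem: without any open set condition, the fractal
dimension III of the attractor equals the unique solution `s` of `∑ cᵢ^s = 1`. -/
theorem dim3_eq_moran_root {X : Type*} [MetricSpace X] [CompleteSpace X]
    {k : ℕ} (f : Fin k → X → X) (c : Fin k → ℝ) (hc : ∀ i, c i ∈ Set.Ioo (0 : ℝ) 1)
    (hf : ∀ i, IsSimilarity (f i) (c i))
    (K : Set X) (hne : K.Nonempty) (hcpt : IsCompact K) (hK : K = ⋃ i, f i '' K)
    (hdiam : 0 < Metric.diam K)
    (s : ℝ) (hs : 0 ≤ s) (hsum : ∑ i, c i ^ s = 1) :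
    sInf {t : ℝ | 0 ≤ t ∧ H3 f K t = 0} = s := by
  classical
  have hk : 0 < k := by
    rcases Nat.eq_zero_or_pos k with h | h
    · subst h; simp at hsum
    · exact h
  have : Nonempty (Fin k) := Fin.pos_iff_nonempty.mp hk
  have hkne : (Finset.univ : Finset (Fin k)).Nonempty := Finset.univ_nonempty
  set D : ℝ≥0∞ := ENNReal.ofReal (Metric.diam K) with hD
  have hDpos : 0 < D := ENNReal.ofReal_pos.2 hdiam
  have hDtop : D ≠ ∞ := ENNReal.ofReal_ne_top
  -- the key computation of level sums
  have key : ∀ (t : ℝ), 0 ≤ t → ∀ m : ℕ,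
      (∑ ω : Fin m → Fin k, ENNReal.ofReal (Metric.diam (wordComp f ω '' K)) ^ t)
        = ENNReal.ofReal (∑ i, c i ^ t) ^ m * D ^ t := by
    intro t ht m
    have hterm : ∀ ω : Fin m → Fin k,
        ENNReal.ofReal (Metric.diam (wordComp f ω '' K)) ^ t
          = (∏ i, ENNReal.ofReal (c (ω i) ^ t)) * D ^ t := by
      intro ω
      have hprodpos : (0:ℝ) < ∏ i, c (ω i) := Finset.prod_pos fun i _ => (hc _).1
      rw [(isSimilarity_wordComp hf ω).diam_image hprodpos K,
        ENNReal.ofReal_mul hprodpos.le, ENNReal.mul_rpow_of_nonneg _ _ ht]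
      congr 1
      rw [ENNReal.ofReal_rpow_of_pos hprodpos,
        ← Real.finset_prod_rpow _ _ (fun i _ => (hc _).1.le) t,
        ENNReal.ofReal_prod_of_nonneg (fun i _ => Real.rpow_nonneg (hc _).1.le t)]
    calc (∑ ω : Fin m → Fin k, ENNReal.ofReal (Metric.diam (wordComp f ω '' K)) ^ t)
        = ∑ ω : Fin m → Fin k, (∏ i, ENNReal.ofReal (c (ω i) ^ t)) * D ^ t :=
          Finset.sum_congr rfl fun ω _ => hterm ω
      _ = (∑ j, ENNReal.ofReal (c j ^ t)) ^ m * D ^ t := by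
          rw [← Finset.sum_mul]
          exact congrArg (· * D ^ t) (Fintype.sum_pow (fun j => ENNReal.ofReal (c j ^ t)) m).symm
      _ = ENNReal.ofReal (∑ i, c i ^ t) ^ m * D ^ t := by
          rw [ENNReal.ofReal_sum_of_nonneg (fun i _ => Real.rpow_nonneg (hc _).1.le t)]
  -- t > s implies H3 = 0
  have hgt : ∀ t : ℝ, s < t → t ∈ {t : ℝ | 0 ≤ t ∧ H3 f K t = 0} := by
    intro t hst
    have ht0 : 0 ≤ t := hs.trans hst.le
    refine ⟨ht0, ?_⟩
    have hρ : ∑ i, c i ^ t < 1 := by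
      calc ∑ i, c i ^ t < ∑ i, c i ^ s :=
            Finset.sum_lt_sum_of_nonempty hkne fun i _ =>
              Real.rpow_lt_rpow_of_exponent_gt (hc i).1 (hc i).2 hst
        _ = 1 := hsum
    have hr1 : ENNReal.ofReal (∑ i, c i ^ t) < 1 := ENNReal.ofReal_lt_one.2 hρ
    rw [H3, ENNReal.iSup_eq_zero]
    intro n
    have hle : ∀ m : ℕ, n ≤ m →
        H3pre f K t n ≤ ENNReal.ofReal (∑ i, c i ^ t) ^ m * D ^ t := fun m hm =>
      le_trans (iInf_le _ ⟨m, hm⟩) (le_of_eq (key t ht0 m))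
    have htend : Tendsto (fun m : ℕ => ENNReal.ofReal (∑ i, c i ^ t) ^ m * D ^ t)
        atTop (𝓝 0) := by
      have h1 := ENNReal.tendsto_pow_atTop_nhds_zero_of_lt_one hr1
      have h2 := ENNReal.Tendsto.mul_const h1
        (Or.inr (ENNReal.rpow_ne_top_of_nonneg ht0 hDtop))
      simpa using h2
    have : H3pre f K t n ≤ 0 :=
      ge_of_tendsto htend (eventually_atTop.2 ⟨n, fun m hm => hle m hm⟩)
    exact le_antisymm this zero_le
  -- every member of the set is ≥ s
  have hlb : ∀ t ∈ {t : ℝ | 0 ≤ t ∧ H3 f K t = 0}, s ≤ t := by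
    rintro t ⟨ht0, ht3⟩
    by_contra hlt
    push_neg at hlt
    have hρ : 1 < ∑ i, c i ^ t := by
      calc (1:ℝ) = ∑ i, c i ^ s := hsum.symm
        _ < ∑ i, c i ^ t :=
            Finset.sum_lt_sum_of_nonempty hkne fun i _ =>
              Real.rpow_lt_rpow_of_exponent_gt (hc i).1 (hc i).2 hlt
    have hge : ∀ n : ℕ, D ^ t ≤ H3pre f K t n := by
      intro n
      refine le_iInf fun m => ?_
      rw [key t ht0 m.1]
      calc D ^ t = 1 * D ^ t := (one_mul _).symm
        _ ≤ ENNReal.ofReal (∑ i, c i ^ t) ^ (m:ℕ) * D ^ t :=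
            mul_le_mul_left (one_le_pow₀ (ENNReal.one_le_ofReal.2 hρ.le)) _
    have hH3 : D ^ t ≤ H3 f K t := le_trans (hge 0) (le_iSup _ 0)
    rw [ht3] at hH3
    exact absurd (le_antisymm hH3 zero_le)
      (ENNReal.rpow_pos hDpos hDtop).ne'
  -- conclude
  have hbdd : BddBelow {t : ℝ | 0 ≤ t ∧ H3 f K t = 0} := ⟨s, hlb⟩
  apply le_antisymm
  · calc sInf {t : ℝ | 0 ≤ t ∧ H3 f K t = 0} ≤ sInf (Set.Ioi s) :=
        csInf_le_csInf hbdd (Set.nonempty_Ioi) (fun t ht => hgt t ht)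
      _ = s := csInf_Ioi
  · exact le_csInf ⟨s + 1, hgt _ (lt_add_one s)⟩ hlb
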